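/- Let a_0, a_1, a_2 ∈ ℤ² be such that |det(a_0 - a_1, a_0 - a_2)| = 3 and each of the vectors a_0 - a_1, a_0 - a_2, a_1 - a_2 has coprime coordinates. Then b = (a_0 + a_1 + a_2)/3 is a lattice point lying in the relative interior of the triangle conv(a_0, a_1, a_2), and the only lattice points in this triangle are a_0, a_1, a_2, and b. -/

import Mathlib

open Set

lemma zmod3_key (u0 u1 v0 v1 : ZMod 3) (hdet : u0*v1 - u1*v0 = 0)
    (hu : ¬(u0=0 ∧ u1=0)) (hv : ¬(v0=0 ∧ v1=0)) (huv : ¬(u0 - v0 = 0 ∧ u1 - v1 = 0)) :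
    u0+v0 = 0 ∧ u1+v1 = 0 := by revert hdet hu hv huv; revert u0 u1 v0 v1; decide

lemma mem_triangle_iff {E : Type*} [AddCommGroup E] [Module ℝ E] (p q r x : E) :
    x ∈ convexHull ℝ ({p,q,r} : Set E) ↔
      ∃ c0 c1 c2 : ℝ, 0 ≤ c0 ∧ 0 ≤ c1 ∧ 0 ≤ c2 ∧ c0+c1+c2 = 1 ∧ c0•p + c1•q + c2•r = x := by
  rw [convexHull_insert (insert_nonempty _ _), convexHull_pair]
  constructor
  · rintro h
    rw [mem_convexJoin] at h
    obtain ⟨p', hp', y, hy, hx⟩ := h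
    rw [mem_singleton_iff] at hp'
    subst hp'
    obtain ⟨c, d, hc, hd, hcd, rfl⟩ := hy
    obtain ⟨a, bb, ha, hb, hab, rfl⟩ := hx
    refine ⟨a, bb*c, bb*d, ha, by positivity, by positivity, by nlinarith, ?_⟩
    rw [smul_add, smul_smul, smul_smul, add_assoc]
  · rintro ⟨c0, c1, c2, h0, h1, h2, hsum, rfl⟩
    rw [mem_convexJoin]
    rcases eq_or_lt_of_le (add_nonneg h1 h2) with h | h
    · have hc1 : c1 = 0 := by linarith
      have hc2 : c2 = 0 := by linarith
      have hc0 : c0 = 1 := by linarith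
      exact ⟨p, rfl, q, ⟨1,0,by norm_num⟩, 1, 0, by norm_num, by simp [hc0, hc1, hc2]⟩
    · have hs : c1 + c2 ≠ 0 := ne_of_gt h
      refine ⟨p, rfl, (c1/(c1+c2))•q + (c2/(c1+c2))•r,
        ⟨c1/(c1+c2), c2/(c1+c2), by positivity, by positivity, by field_simp, rfl⟩,
        c0, c1+c2, h0, le_of_lt h, by linarith, ?_⟩
      rw [smul_add, smul_smul, smul_smul, add_assoc]
      congr 2 <;> field_simp

def toR (x : Fin 2 → ℤ) : Fin 2 → ℝ := fun i => (x i : ℝ)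

/-- Determinant of the 2×2 matrix with columns `u, v ∈ ℤ²`. -/
def det2 (u v : Fin 2 → ℤ) : ℤ := u 0 * v 1 - u 1 * v 0

/-- If `|det(a₀-a₁, a₀-a₂)| = 3` and each pairwise difference of `a₀,a₁,a₂ ∈ ℤ²`
has coprime coordinates, then `b = (a₀+a₁+a₂)/3` is a lattice point in the
relative interior of the triangle, and the only lattice points in the triangle
are `a₀, a₁, a₂, b`. -/
theorem almost_empty_triangle (a0 a1 a2 : Fin 2 → ℤ)
    (hdet : (det2 (a0 - a1) (a0 - a2)).natAbs = 3)
    (h01 : Int.gcd (a0 0 - a1 0) (a0 1 - a1 1) = 1)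
    (h02 : Int.gcd (a0 0 - a2 0) (a0 1 - a2 1) = 1)
    (h12 : Int.gcd (a1 0 - a2 0) (a1 1 - a2 1) = 1) :
    ∃ b : Fin 2 → ℤ, a0 + a1 + a2 = 3 • b ∧
      toR b ∈ intrinsicInterior ℝ
        (convexHull ℝ ({toR a0, toR a1, toR a2} : Set (Fin 2 → ℝ))) ∧
      ∀ z : Fin 2 → ℤ,
        toR z ∈ convexHull ℝ ({toR a0, toR a1, toR a2} : Set (Fin 2 → ℝ)) ↔
          (z = a0 ∨ z = a1 ∨ z = a2 ∨ z = b) := by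
  -- integer determinant with columns a1-a0, a2-a0
  set Dz : ℤ := det2 (a1 - a0) (a2 - a0) with hDzdef
  have hDz : Dz = (a1 0 - a0 0) * (a2 1 - a0 1) - (a1 1 - a0 1) * (a2 0 - a0 0) := by
    simp [hDzdef, det2]
  have hDnat : Dz.natAbs = 3 := by
    rw [show Dz = det2 (a0 - a1) (a0 - a2) by simp [hDzdef, det2]; ring]
    exact hdet
  have hD3 : Dz = 3 ∨ Dz = -3 := Int.natAbs_eq_iff.mp hDnat
  have hDne : Dz ≠ 0 := by rcases hD3 with h | h <;> omega
  -- non-divisibility by 3 of the primitive vectors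
  have h3u : ¬((3:ℤ) ∣ (a1 0 - a0 0) ∧ (3:ℤ) ∣ (a1 1 - a0 1)) := by
    rintro ⟨d0, d1⟩
    have g0 : (3:ℤ) ∣ (a0 0 - a1 0) := by omega
    have g1 : (3:ℤ) ∣ (a0 1 - a1 1) := by omega
    have := Int.dvd_gcd g0 g1
    rw [h01] at this; norm_num at this
  have h3v : ¬((3:ℤ) ∣ (a2 0 - a0 0) ∧ (3:ℤ) ∣ (a2 1 - a0 1)) := by
    rintro ⟨d0, d1⟩
    have g0 : (3:ℤ) ∣ (a0 0 - a2 0) := by omega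
    have g1 : (3:ℤ) ∣ (a0 1 - a2 1) := by omega
    have := Int.dvd_gcd g0 g1
    rw [h02] at this; norm_num at this
  have h3w : ¬((3:ℤ) ∣ (a1 0 - a2 0) ∧ (3:ℤ) ∣ (a1 1 - a2 1)) := by
    rintro ⟨d0, d1⟩
    have := Int.dvd_gcd d0 d1
    rw [h12] at this; norm_num at this
  -- key congruence : 3 ∣ (a1 i - a0 i) + (a2 i - a0 i)
  have hk : ∀ i : Fin 2, (3:ℤ) ∣ (a1 i - a0 i) + (a2 i - a0 i) := by
    have cz : ∀ x : ℤ, ((x : ZMod 3) = 0) ↔ (3:ℤ) ∣ x := fun x =>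
      ZMod.intCast_zmod_eq_zero_iff_dvd x 3
    have hdet0 : ((a1 0 - a0 0 : ℤ) : ZMod 3) * ((a2 1 - a0 1 : ℤ) : ZMod 3)
        - ((a1 1 - a0 1 : ℤ) : ZMod 3) * ((a2 0 - a0 0 : ℤ) : ZMod 3) = 0 := by
      have : ((Dz : ZMod 3)) = 0 := by
        rcases hD3 with h | h <;> rw [h] <;> decide
      rw [hDz] at this; push_cast at this ⊢; linear_combination this
    obtain ⟨e0, e1⟩ := zmod3_key _ _ _ _ hdet0
      (by rw [cz, cz]; exact h3u)
      (by rw [cz, cz]; exact h3v)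
      (by
        rw [show ((a1 0 - a0 0 : ℤ) : ZMod 3) - ((a2 0 - a0 0 : ℤ) : ZMod 3)
            = ((a1 0 - a2 0 : ℤ) : ZMod 3) by push_cast; ring,
          show ((a1 1 - a0 1 : ℤ) : ZMod 3) - ((a2 1 - a0 1 : ℤ) : ZMod 3)
            = ((a1 1 - a2 1 : ℤ) : ZMod 3) by push_cast; ring, cz, cz]
        exact h3w)
    intro i
    fin_cases i
    · rw [← cz]; push_cast at e0 ⊢; linear_combination e0
    · rw [← cz]; push_cast at e1 ⊢; linear_combination e1
  -- the lattice point b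
  have hkk : ∀ i : Fin 2, (3:ℤ) ∣ a0 i + a1 i + a2 i := by
    intro i
    have := hk i
    omega
  set b : Fin 2 → ℤ := fun i => (a0 i + a1 i + a2 i) / 3 with hbdef
  have hb : ∀ i : Fin 2, 3 * b i = a0 i + a1 i + a2 i := by
    intro i
    exact Int.mul_ediv_cancel' (hkk i)
  have hbv : a0 + a1 + a2 = 3 • b := by
    funext i
    have := hb i
    simp only [Pi.add_apply, Pi.smul_apply]
    rw [nsmul_eq_mul]
    push_cast
    omega
  -- real versions
  have DR_eq : ((Dz : ℝ)) = ((a1 0 : ℝ) - a0 0) * ((a2 1 : ℝ) - a0 1)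
      - ((a1 1 : ℝ) - a0 1) * ((a2 0 : ℝ) - a0 0) := by
    rw [hDz]; push_cast; ring
  have hDRne : ((Dz : ℝ)) ≠ 0 := Int.cast_ne_zero.mpr hDne
  -- barycentric coordinate functions
  set f1 : (Fin 2 → ℝ) → ℝ := fun x =>
    ((x 0 - (a0 0 : ℝ)) * ((a2 1 : ℝ) - a0 1) - (x 1 - (a0 1 : ℝ)) * ((a2 0 : ℝ) - a0 0)) / (Dz : ℝ)
    with hf1def
  set f2 : (Fin 2 → ℝ) → ℝ := fun x =>
    (((a1 0 : ℝ) - a0 0) * (x 1 - (a0 1 : ℝ)) - ((a1 1 : ℝ) - a0 1) * (x 0 - (a0 0 : ℝ))) / (Dz : ℝ)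
    with hf2def
  have hf1c : Continuous f1 := by rw [hf1def]; fun_prop
  have hf2c : Continuous f2 := by rw [hf2def]; fun_prop
  set O : Set (Fin 2 → ℝ) := {x | 0 < f1 x ∧ 0 < f2 x ∧ f1 x + f2 x < 1} with hOdef
  have hOopen : IsOpen O := by
    rw [hOdef, setOf_and, setOf_and]
    exact ((isOpen_lt continuous_const hf1c).inter
      ((isOpen_lt continuous_const hf2c).inter
        (isOpen_lt (hf1c.add hf2c) continuous_const)))
  have hOsub : O ⊆ convexHull ℝ ({toR a0, toR a1, toR a2} : Set (Fin 2 → ℝ)) := by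
    intro x hx
    obtain ⟨hx1, hx2, hx3⟩ := hx
    rw [mem_triangle_iff]
    refine ⟨1 - f1 x - f2 x, f1 x, f2 x, by linarith, le_of_lt hx1, le_of_lt hx2, by ring, ?_⟩
    funext i
    simp only [Pi.add_apply, Pi.smul_apply, smul_eq_mul, toR]
    have hDRne' : ((a1 0 : ℝ) - a0 0) * ((a2 1 : ℝ) - a0 1)
        - ((a1 1 : ℝ) - a0 1) * ((a2 0 : ℝ) - a0 0) ≠ 0 := by
      rw [← DR_eq]; exact hDRne
    fin_cases i <;>
      · simp only [hf1def, hf2def, Fin.zero_eta, Fin.mk_one, Fin.isValue]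
        field_simp
        rw [DR_eq]
        ring
  have hbO : toR b ∈ O := by
    have hb0 : (3:ℝ) * (b 0 : ℝ) = (a0 0 : ℝ) + (a1 0 : ℝ) + (a2 0 : ℝ) := by
      exact_mod_cast hb 0
    have hb1 : (3:ℝ) * (b 1 : ℝ) = (a0 1 : ℝ) + (a1 1 : ℝ) + (a2 1 : ℝ) := by
      exact_mod_cast hb 1
    have hf1b : f1 (toR b) = 1/3 := by
      simp only [hf1def, toR]
      rw [div_eq_iff hDRne]
      rw [DR_eq]
      linear_combination (((a2 1 : ℝ) - a0 1)/3) * hb0 - (((a2 0 : ℝ) - a0 0)/3) * hb1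
    have hf2b : f2 (toR b) = 1/3 := by
      simp only [hf2def, toR]
      rw [div_eq_iff hDRne]
      rw [DR_eq]
      linear_combination (((a1 0 : ℝ) - a0 0)/3) * hb1 - (((a1 1 : ℝ) - a0 1)/3) * hb0
    rw [hOdef]
    constructor
    · rw [hf1b]; norm_num
    constructor
    · rw [hf2b]; norm_num
    · rw [hf1b, hf2b]; norm_num
  have hbint : toR b ∈ intrinsicInterior ℝ
      (convexHull ℝ ({toR a0, toR a1, toR a2} : Set (Fin 2 → ℝ))) :=
    interior_subset_intrinsicInterior (interior_maximal hOsub hOopen hbO)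
  refine ⟨b, hbv, hbint, ?_⟩
  intro z
  constructor
  · -- forward direction
    intro hz
    rw [mem_triangle_iff] at hz
    obtain ⟨c0, c1, c2, h0, h1, h2, hsum, hcomb⟩ := hz
    have e : ∀ i : Fin 2, c0 * (a0 i : ℝ) + c1 * (a1 i : ℝ) + c2 * (a2 i : ℝ) = (z i : ℝ) := by
      intro i
      have := congrFun hcomb i
      simpa [toR] using this
    have hzv : ∀ i : Fin 2, (z i : ℝ) - (a0 i : ℝ)
        = c1 * ((a1 i : ℝ) - a0 i) + c2 * ((a2 i : ℝ) - a0 i) := by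
      intro i
      linear_combination -(e i) + ((a0 i : ℝ)) * hsum
    set p : ℤ := det2 (z - a0) (a2 - a0) with hpdef
    set q : ℤ := det2 (a1 - a0) (z - a0) with hqdef
    have hp : (p : ℝ) = c1 * (Dz : ℝ) := by
      have hpe : (p : ℝ) = ((z 0 : ℝ) - a0 0) * ((a2 1 : ℝ) - a0 1)
          - ((z 1 : ℝ) - a0 1) * ((a2 0 : ℝ) - a0 0) := by
        simp only [hpdef, det2, Pi.sub_apply]; push_cast; ring
      rw [hpe, DR_eq]
      linear_combination (((a2 1 : ℝ) - a0 1)) * hzv 0 - (((a2 0 : ℝ) - a0 0)) * hzv 1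
    have hq : (q : ℝ) = c2 * (Dz : ℝ) := by
      have hqe : (q : ℝ) = ((a1 0 : ℝ) - a0 0) * ((z 1 : ℝ) - a0 1)
          - ((a1 1 : ℝ) - a0 1) * ((z 0 : ℝ) - a0 0) := by
        simp only [hqdef, det2, Pi.sub_apply]; push_cast; ring
      rw [hqe, DR_eq]
      linear_combination (((a1 0 : ℝ) - a0 0)) * hzv 1 - (((a1 1 : ℝ) - a0 1)) * hzv 0
    have hc12 : c1 + c2 ≤ 1 := by linarith
    -- extract integers m n with the right properties
    obtain ⟨m, n, hm0, hn0, hmn, heq⟩ :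
        ∃ m n : ℤ, 0 ≤ m ∧ 0 ≤ n ∧ m + n ≤ 3 ∧
          ∀ i : Fin 2, 3 * (z i - a0 i) = m * (a1 i - a0 i) + n * (a2 i - a0 i) := by
      rcases hD3 with hD | hD
      · refine ⟨p, q, ?_, ?_, ?_, ?_⟩
        · have : (0:ℝ) ≤ (p:ℝ) := by rw [hp, hD]; push_cast; positivity
          exact_mod_cast this
        · have : (0:ℝ) ≤ (q:ℝ) := by rw [hq, hD]; push_cast; positivity
          exact_mod_cast this
        · have : ((p:ℝ)) + (q:ℝ) ≤ 3 := by
            rw [hp, hq, hD]; push_cast; nlinarith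
          exact_mod_cast this
        · intro i
          have : ((3 * (z i - a0 i) : ℤ) : ℝ)
              = ((p * (a1 i - a0 i) + q * (a2 i - a0 i) : ℤ) : ℝ) := by
            push_cast
            rw [hp, hq, hD]
            push_cast
            linear_combination 3 * hzv i
          exact_mod_cast this
      · refine ⟨-p, -q, ?_, ?_, ?_, ?_⟩
        · have : ((p:ℝ)) ≤ 0 := by rw [hp, hD]; push_cast; nlinarith
          have h' : p ≤ 0 := by exact_mod_cast this
          omega
        · have : ((q:ℝ)) ≤ 0 := by rw [hq, hD]; push_cast; nlinarith
          have h' : q ≤ 0 := by exact_mod_cast this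
          omega
        · have : (-3:ℝ) ≤ ((p:ℝ)) + (q:ℝ) := by
            rw [hp, hq, hD]; push_cast; nlinarith
          have h' : (-3:ℤ) ≤ p + q := by exact_mod_cast this
          omega
        · intro i
          have : ((3 * (z i - a0 i) : ℤ) : ℝ)
              = (((-p) * (a1 i - a0 i) + (-q) * (a2 i - a0 i) : ℤ) : ℝ) := by
            push_cast
            rw [hp, hq, hD]
            push_cast
            linear_combination 3 * hzv i
          exact_mod_cast this
    have hm3 : m ≤ 3 := by omega
    clear hp hq hzv e hcomb hsum h0 h1 h2 hc12
    interval_cases m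
    · -- m = 0
      have hn3 : n ≤ 3 := by omega
      interval_cases n
      · left; funext i; have := heq i; omega
      · exfalso
        exact h3v ⟨by have := heq 0; omega, by have := heq 1; omega⟩
      · exfalso
        exact h3v ⟨by have := heq 0; omega, by have := heq 1; omega⟩
      · right; right; left; funext i; have := heq i; omega
    · -- m = 1
      have hn2 : n ≤ 2 := by omega
      interval_cases n
      · exfalso
        exact h3u ⟨by have := heq 0; omega, by have := heq 1; omega⟩
      · right; right; right; funext i
        have := heq i; have := hb i; omega
      · exfalso
        refine h3v ⟨?_, ?_⟩
        · have := heq 0; have := hk 0; omega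
        · have := heq 1; have := hk 1; omega
    · -- m = 2
      have hn1 : n ≤ 1 := by omega
      interval_cases n
      · exfalso
        exact h3u ⟨by have := heq 0; omega, by have := heq 1; omega⟩
      · exfalso
        refine h3u ⟨?_, ?_⟩
        · have := heq 0; have := hk 0; omega
        · have := heq 1; have := hk 1; omega
    · -- m = 3
      have hn0' : n = 0 := by omega
      subst hn0'
      right; left; funext i; have := heq i; omega
  · -- backward direction
    rintro (rfl | rfl | rfl | rfl)
    · exact subset_convexHull ℝ _ (by simp)
    · exact subset_convexHull ℝ _ (by simp)
    · exact subset_convexHull ℝ _ (by simp)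
    · exact intrinsicInterior_subset hbint
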